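/- For α < 1/2, p ≥ 1, t > 0, and either initial point x ∈ {-1,1}, the p-th moment of δ(t) := e^{-t} x Y / ((1-e^{-t})(2α-1)Y + 1 + e^{-t} x Y) under Y ∼ p_t(x,·) satisfies ∑_{y∈{-1,1}} p_t(x,y) |δ(t)(y)|^p ≤ (2α)^{1-p} e^{-tp} (1-e^{-t})^{1-p}. -/

import Mathlib

/-- the one-dimensional biased heat kernel. -/
noncomputable def heatKer (α t x y : ℝ) : ℝ :=
  (1 - Real.exp (-t)) / 2 * (2 * α - 1) * y + (1 + Real.exp (-t) * x * y) / 2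

/-- `δ(t)(y) := e^{-t} x y / (2 p_t(x,y))`. -/
noncomputable def deltaCoef (α t x y : ℝ) : ℝ :=
  Real.exp (-t) * x * y / (2 * heatKer α t x y)


lemma aux (e α p h₁ h₂ : ℝ) (he0 : 0 < e) (he1 : e < 1) (hα : 0 < α)
    (hp : 1 ≤ p) (hc1 : α * (1 - e) ≤ h₁) (hc2 : α * (1 - e) ≤ h₂) :
    h₁ * (e / (2 * h₁)) ^ p + h₂ * (e / (2 * h₂)) ^ p
      ≤ (2 * α) ^ (1 - p) * e ^ p * (1 - e) ^ (1 - p) := by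
  have hae : 0 < α * (1 - e) := by nlinarith
  have h1p : 0 < h₁ := lt_of_lt_of_le hae hc1
  have h2p : 0 < h₂ := lt_of_lt_of_le hae hc2
  have key : ∀ h : ℝ, 0 < h → α * (1 - e) ≤ h →
      h * (e / (2 * h)) ^ p ≤ e ^ p * 2 ^ (-p) * (α * (1 - e)) ^ (1 - p) := by
    intro h hh hc
    have : h * (e / (2 * h)) ^ p = e ^ p * 2 ^ (-p) * h ^ (1 - p) := by
      rw [Real.div_rpow he0.le (by positivity), Real.mul_rpow (by norm_num) hh.le,
        Real.rpow_neg (by norm_num), Real.rpow_sub hh, Real.rpow_one]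
      field_simp
    rw [this]
    have hb : h ^ (1 - p) ≤ (α * (1 - e)) ^ (1 - p) :=
      Real.rpow_le_rpow_of_nonpos hae hc (by linarith)
    have : (0:ℝ) < e ^ p * 2 ^ (-p) := by positivity
    nlinarith [this]
  have h1 := key h₁ h1p hc1
  have h2 := key h₂ h2p hc2
  have hr : (2 * α) ^ (1 - p) * e ^ p * (1 - e) ^ (1 - p)
      = 2 * (e ^ p * 2 ^ (-p) * (α * (1 - e)) ^ (1 - p)) := by
    rw [Real.mul_rpow (by norm_num) hα.le, Real.mul_rpow hα.le (by linarith),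
      Real.rpow_sub (by norm_num : (0:ℝ) < 2), Real.rpow_one, Real.rpow_neg (by norm_num)]
    field_simp
  rw [hr]; linarith

/-- uniform `p`-th moment bound on `δ(t)` for `α < 1/2`. -/
theorem delta_moment_bound (α t p x : ℝ)
    (hα : α ∈ Set.Ioo (0:ℝ) (1/2)) (ht : 0 < t) (hp : 1 ≤ p)
    (hx : x = 1 ∨ x = -1) :
    heatKer α t x 1 * |deltaCoef α t x 1| ^ p
      + heatKer α t x (-1) * |deltaCoef α t x (-1)| ^ p
      ≤ (2 * α) ^ (1 - p) * Real.exp (-t * p) * (1 - Real.exp (-t)) ^ (1 - p) := by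
  obtain ⟨hα0, hα2⟩ := hα
  set e := Real.exp (-t) with he
  have he0 : 0 < e := Real.exp_pos _
  have he1 : e < 1 := by
    rw [he]; exact Real.exp_lt_one_iff.mpr (by linarith)
  have hexp : Real.exp (-t * p) = e ^ p := by
    rw [Real.exp_mul]
  rw [hexp]
  have hae : 0 < α * (1 - e) := by nlinarith
  rcases hx with rfl | rfl
  · have h1 : heatKer α t 1 1 = α * (1 - e) + e := by
      simp [heatKer]; ring
    have h2 : heatKer α t 1 (-1) = (1 - α) * (1 - e) := by
      simp [heatKer]; ring
    have h1p : 0 < heatKer α t 1 1 := by rw [h1]; nlinarith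
    have h2p : 0 < heatKer α t 1 (-1) := by rw [h2]; nlinarith
    have d1 : |deltaCoef α t 1 1| = e / (2 * heatKer α t 1 1) := by
      rw [abs_of_nonneg]; · simp [deltaCoef, ← he]
      simp [deltaCoef]; positivity
    have d2 : |deltaCoef α t 1 (-1)| = e / (2 * heatKer α t 1 (-1)) := by
      rw [abs_of_nonpos, deltaCoef]
      · rw [← he]; field_simp
      · rw [deltaCoef, ← he]
        have : (0:ℝ) < 2 * heatKer α t 1 (-1) := by linarith
        apply div_nonpos_of_nonpos_of_nonneg <;> nlinarith
    rw [d1, d2]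
    refine aux e α p _ _ he0 he1 hα0 hp ?_ ?_
    · rw [h1]; linarith
    · rw [h2]; nlinarith
  · have h1 : heatKer α t (-1) 1 = α * (1 - e) := by
      simp [heatKer]; ring
    have h2 : heatKer α t (-1) (-1) = 1 - α * (1 - e) := by
      simp [heatKer]; ring
    have h1p : 0 < heatKer α t (-1) 1 := by rw [h1]; exact hae
    have h2p : 0 < heatKer α t (-1) (-1) := by rw [h2]; nlinarith
    have d1 : |deltaCoef α t (-1) 1| = e / (2 * heatKer α t (-1) 1) := by
      rw [abs_of_nonpos, deltaCoef]
      · rw [← he]; field_simp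
      · rw [deltaCoef, ← he]
        apply div_nonpos_of_nonpos_of_nonneg <;> nlinarith
    have d2 : |deltaCoef α t (-1) (-1)| = e / (2 * heatKer α t (-1) (-1)) := by
      rw [abs_of_nonneg] <;> simp [deltaCoef, ← he]
      positivity
    rw [d1, d2]
    refine aux e α p _ _ he0 he1 hα0 hp ?_ ?_
    · rw [h1]
    · rw [h2]; nlinarith
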